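/- arXiv:2512.18112 — 3 statements merged into one kernel-verified Lean document; each statement's English description precedes it below -/
import Mathlib

section
/- Let E be a real inner product space, C ⊆ E a nonempty convex set, m > 0, and f₁, f₂ : E → ℝ two functions, each m-strongly convex on C and Fréchet differentiable with gradients ∇f₁, ∇f₂ at every point of C. If x₁ ∈ C minimizes f₁ over C and x₂ ∈ C minimizes f₂ over C, then m ‖x₁ − x₂‖ ≤ ‖∇f₁(x₂) − ∇f₂(x₂)‖. -/
open Filter Topology RealInnerProductSpace

/-- Gradient inequality for strongly convex functions. -/
lemma strongConvex_grad_ineq {E : Type*} [NormedAddCommGroup E] [InnerProductSpace ℝ E]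
    {C : Set E} {m : ℝ} {f : E → ℝ} {gx x y : E} (hf : StrongConvexOn C m f)
    (hd : HasFDerivAt f (innerSL ℝ gx) x) (hx : x ∈ C) (hy : y ∈ C) :
    f x + ⟪gx, y - x⟫ + m / 2 * ‖y - x‖ ^ 2 ≤ f y := by
  set v := y - x with hv
  set h : ℝ → ℝ := fun t => f (x + t • v) with hh
  have hder : HasDerivAt h (⟪gx, v⟫) 0 := by
    have hline : HasDerivAt (fun t : ℝ => x + t • v) v 0 := by
      simpa using ((hasDerivAt_id (0 : ℝ)).smul_const v).const_add x
    have hd' : HasFDerivAt f (innerSL ℝ gx) (x + (0 : ℝ) • v) := by simpa using hd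
    have := hd'.comp_hasDerivAt 0 hline
    exact this
  rw [hasDerivAt_iff_tendsto_slope] at hder
  have hLHS : Tendsto (slope h 0) (𝓝[>] (0 : ℝ)) (𝓝 (⟪gx, v⟫)) :=
    hder.mono_left (nhdsWithin_mono _ (fun t ht => ne_of_gt ht))
  have hRHS : Tendsto (fun t : ℝ => f y - f x - m / 2 * (1 - t) * ‖v‖ ^ 2)
      (𝓝[>] (0 : ℝ)) (𝓝 (f y - f x - m / 2 * ‖v‖ ^ 2)) := by
    have : ContinuousAt (fun t : ℝ => f y - f x - m / 2 * (1 - t) * ‖v‖ ^ 2) 0 := by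
      fun_prop
    have h2 : Tendsto (fun t : ℝ => f y - f x - m / 2 * (1 - t) * ‖v‖ ^ 2)
        (𝓝[>] (0 : ℝ)) (𝓝 (f y - f x - m / 2 * (1 - (0 : ℝ)) * ‖v‖ ^ 2)) :=
      this.continuousWithinAt (s := Set.Ioi (0 : ℝ))
    simpa using h2
  have hev : ∀ᶠ t in 𝓝[>] (0 : ℝ),
      slope h 0 t ≤ f y - f x - m / 2 * (1 - t) * ‖v‖ ^ 2 := by
    filter_upwards [Ioo_mem_nhdsGT_of_mem (Set.mem_Ico.2 ⟨le_refl (0 : ℝ), one_pos⟩)]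
      with t ht
    have ht0 : (0 : ℝ) < t := ht.1
    have ht1 : t < 1 := ht.2
    have key := hf.2 hx hy (show (0:ℝ) ≤ 1 - t by linarith) ht0.le (by ring)
    have hpt : (1 - t) • x + t • y = x + t • v := by
      simp only [hv]; module
    rw [hpt] at key
    have : h t - h 0 ≤ t * (f y - f x - m / 2 * (1 - t) * ‖v‖ ^ 2) := by
      simp only [hh, zero_smul, add_zero]
      have hnorm : ‖x - y‖ = ‖v‖ := by rw [hv, norm_sub_rev]
      rw [hnorm] at key
      simp only [smul_eq_mul] at key
      nlinarith [key]
    rw [slope_def_field, div_eq_inv_mul]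
    simp only [sub_zero]
    calc t⁻¹ * (h t - h 0) ≤ t⁻¹ * (t * (f y - f x - m / 2 * (1 - t) * ‖v‖ ^ 2)) := by
          apply mul_le_mul_of_nonneg_left this (by positivity)
      _ = f y - f x - m / 2 * (1 - t) * ‖v‖ ^ 2 := by field_simp
  have := le_of_tendsto_of_tendsto hLHS hRHS hev
  linarith


/-- Stability of constrained minimizers of strongly convex functions: if `f₁, f₂` are
`m`-strongly convex on a nonempty convex set `C` in a real inner product space, Fréchet
differentiable on `C` with gradients `g₁, g₂` (i.e. derivative `⟪gᵢ x, ·⟫`), and `x₁, x₂`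
minimize `f₁, f₂` over `C` respectively, then `m * ‖x₁ - x₂‖ ≤ ‖g₁ x₂ - g₂ x₂‖`. -/
theorem stmt_8 {E : Type*} [NormedAddCommGroup E] [InnerProductSpace ℝ E]
    {C : Set E} (hCne : C.Nonempty) (hCconv : Convex ℝ C) {m : ℝ} (hm : 0 < m)
    {f₁ f₂ : E → ℝ} {g₁ g₂ : E → E}
    (hf₁ : StrongConvexOn C m f₁) (hf₂ : StrongConvexOn C m f₂)
    (hd₁ : ∀ x ∈ C, HasFDerivAt f₁ (innerSL ℝ (g₁ x)) x)
    (hd₂ : ∀ x ∈ C, HasFDerivAt f₂ (innerSL ℝ (g₂ x)) x)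
    {x₁ x₂ : E} (hx₁ : x₁ ∈ C) (hx₂ : x₂ ∈ C)
    (hmin₁ : ∀ y ∈ C, f₁ x₁ ≤ f₁ y) (hmin₂ : ∀ y ∈ C, f₂ x₂ ≤ f₂ y) :
    m * ‖x₁ - x₂‖ ≤ ‖g₁ x₂ - g₂ x₂‖ := by
  -- variational inequalities
  have VI : ∀ (f : E → ℝ) (g : E → E) (x : E), x ∈ C →
      (∀ y ∈ C, HasFDerivAt f (innerSL ℝ (g y)) y) → (∀ y ∈ C, f x ≤ f y) →
      ∀ y ∈ C, 0 ≤ ⟪g x, y - x⟫ := by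
    intro f g x hx hd hmin y hy
    have hmin' : IsLocalMinOn f C x := (isMinOn_iff.mpr hmin).localize
    have := hmin'.hasFDerivWithinAt_nonneg ((hd x hx).hasFDerivWithinAt)
      (sub_mem_posTangentConeAt_of_segment_subset (hCconv.segment_subset hx hy))
    simpa using this
  have VI₁ : 0 ≤ ⟪g₁ x₁, x₂ - x₁⟫ := VI f₁ g₁ x₁ hx₁ hd₁ hmin₁ x₂ hx₂
  have VI₂ : 0 ≤ ⟪g₂ x₂, x₁ - x₂⟫ := VI f₂ g₂ x₂ hx₂ hd₂ hmin₂ x₁ hx₁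
  have A := strongConvex_grad_ineq hf₁ (hd₁ x₁ hx₁) hx₁ hx₂
  have B := strongConvex_grad_ineq hf₁ (hd₁ x₂ hx₂) hx₂ hx₁
  have hnorm : ‖x₂ - x₁‖ = ‖x₁ - x₂‖ := norm_sub_rev _ _
  rw [hnorm] at A
  -- m ‖Δ‖² ≤ ⟪g₁ x₂ - g₂ x₂, x₂ - x₁⟫
  have key : m * ‖x₁ - x₂‖ ^ 2 ≤ ⟪g₁ x₂ - g₂ x₂, x₂ - x₁⟫ := by
    have h1 : ⟪g₁ x₂, x₁ - x₂⟫ + m * ‖x₁ - x₂‖ ^ 2 ≤ 0 := by linarith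
    have h2 : ⟪g₁ x₂ - g₂ x₂, x₂ - x₁⟫
        = -⟪g₁ x₂, x₁ - x₂⟫ + ⟪g₂ x₂, x₁ - x₂⟫ := by
      rw [inner_sub_left]
      have e1 : ⟪g₁ x₂, x₂ - x₁⟫ = -⟪g₁ x₂, x₁ - x₂⟫ := by
        rw [← inner_neg_right]; congr 1; abel
      have e2 : ⟪g₂ x₂, x₂ - x₁⟫ = -⟪g₂ x₂, x₁ - x₂⟫ := by
        rw [← inner_neg_right]; congr 1; abel
      rw [e1, e2]; ring
    linarith
  have hcs : ⟪g₁ x₂ - g₂ x₂, x₂ - x₁⟫ ≤ ‖g₁ x₂ - g₂ x₂‖ * ‖x₁ - x₂‖ := by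
    calc ⟪g₁ x₂ - g₂ x₂, x₂ - x₁⟫ ≤ ‖g₁ x₂ - g₂ x₂‖ * ‖x₂ - x₁‖ :=
          real_inner_le_norm _ _
      _ = ‖g₁ x₂ - g₂ x₂‖ * ‖x₁ - x₂‖ := by rw [hnorm]
  rcases eq_or_lt_of_le (norm_nonneg (x₁ - x₂)) with h0 | h0
  · rw [← h0, mul_zero]; exact norm_nonneg _
  · have : m * ‖x₁ - x₂‖ * ‖x₁ - x₂‖ ≤ ‖g₁ x₂ - g₂ x₂‖ * ‖x₁ - x₂‖ := by
      nlinarith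
    exact le_of_mul_le_mul_right this h0
end

section
/- Let Q be a metric space, E a real inner product space, C ⊆ E a nonempty convex set, and m > 0, L ≥ 0. Let f : Q × E → ℝ be such that for each q ∈ Q the map x ↦ f(q, x) is m-strongly convex on C and Fréchet differentiable at every point of C with gradient ∇ₓf(q, ·), and suppose the gradient is Lipschitz in the parameter uniformly on C: ‖∇ₓf(q₁, x) − ∇ₓf(q₂, x)‖ ≤ L · d(q₁, q₂) for all x ∈ C and q₁, q₂ ∈ Q. If b : Q → C is a function such that for each q, b(q) minimizes f(q, ·) over C, then b is Lipschitz continuous with constant L/m: ‖b(q₁) − b(q₂)‖ ≤ (L/m) d(q₁, q₂) for all q₁, q₂ ∈ Q. -/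
open Filter Set Topology

private lemma dirDeriv {E : Type*} [NormedAddCommGroup E] [NormedSpace ℝ E]
    {g : E → ℝ} {g' : E →L[ℝ] ℝ} {x : E} (hg : HasFDerivAt g g' x) (y : E) :
    HasDerivAt (fun t : ℝ => g (x + t • (y - x))) (g' (y - x)) 0 := by
  have h1 : HasDerivAt (fun t : ℝ => x + t • (y - x)) (y - x) 0 := by
    simpa using ((hasDerivAt_id (0:ℝ)).smul_const (y - x)).const_add x
  have h2 : HasFDerivAt g g' (x + (0:ℝ) • (y - x)) := by simpa using hg
  exact h2.comp_hasDerivAt 0 h1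

private lemma deriv_le_of_slope {φ : ℝ → ℝ} {d c : ℝ}
    (hφ : HasDerivAt φ d 0) (h : ∀ t ∈ Ioc (0:ℝ) 1, φ t - φ 0 ≤ t * c) : d ≤ c := by
  have ht := (hasDerivAt_iff_tendsto_slope.1 hφ).mono_left
    (nhdsWithin_mono 0 (fun t ht => ne_of_gt ht : Ioi (0:ℝ) ⊆ {(0:ℝ)}ᶜ))
  refine le_of_tendsto ht ?_
  filter_upwards [Ioc_mem_nhdsGT one_pos] with t ht2
  rw [slope_def_field, sub_zero, div_le_iff₀ ht2.1]
  simpa [mul_comm] using h t ht2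

private lemma segMem {E : Type*} [NormedAddCommGroup E] [NormedSpace ℝ E]
    {C : Set E} (hC : Convex ℝ C) {x y : E} (hx : x ∈ C) (hy : y ∈ C)
    {t : ℝ} (ht : t ∈ Ioc (0:ℝ) 1) : x + t • (y - x) ∈ C := by
  have := hC hx hy (by linarith [ht.2] : (0:ℝ) ≤ 1 - t) ht.1.le (by ring)
  have heq : (1 - t) • x + t • y = x + t • (y - x) := by
    simp [smul_sub, sub_smul, one_smul]; abel
  rwa [heq] at this

private lemma subgrad {E : Type*} [NormedAddCommGroup E] [NormedSpace ℝ E]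
    {C : Set E} (hC : Convex ℝ C) {g : E → ℝ} (hg : ConvexOn ℝ C g)
    {g' : E →L[ℝ] ℝ} {x : E} (hx : x ∈ C) (hd : HasFDerivAt g g' x)
    {y : E} (hy : y ∈ C) : g' (y - x) ≤ g y - g x := by
  refine deriv_le_of_slope (dirDeriv hd y) fun t ht => ?_
  have hco := hg.2 hx hy (by linarith [ht.2] : (0:ℝ) ≤ 1 - t) ht.1.le (by ring)
  have heq : (1 - t) • x + t • y = x + t • (y - x) := by
    simp [smul_sub, sub_smul, one_smul]; abel
  rw [heq] at hco
  simp only [smul_eq_mul] at hco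
  simp only [zero_smul, add_zero]
  nlinarith

private lemma foc {E : Type*} [NormedAddCommGroup E] [NormedSpace ℝ E]
    {C : Set E} (hC : Convex ℝ C) {g : E → ℝ}
    {g' : E →L[ℝ] ℝ} {x : E} (hx : x ∈ C) (hd : HasFDerivAt g g' x)
    (hmin : ∀ y ∈ C, g x ≤ g y) {y : E} (hy : y ∈ C) : 0 ≤ g' (y - x) := by
  have h : -(g' (y - x)) ≤ 0 := by
    refine deriv_le_of_slope (dirDeriv hd y).neg fun t ht => ?_
    have := hmin _ (segMem hC hx hy ht)
    simp only [Pi.neg_apply, zero_smul, add_zero]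
    nlinarith
  linarith



/-- Lipschitz best response: if `f (q, ·)` is `m`-strongly convex on a nonempty convex set
`C` and Fréchet differentiable on `C` with gradient `G q ·`, the gradient is `L`-Lipschitz in
the parameter `q` uniformly on `C`, and `b q ∈ C` minimizes `f (q, ·)` over `C` for each `q`,
then `b` is `(L / m)`-Lipschitz. -/
theorem stmt_9 {Q E : Type*} [MetricSpace Q]
    [NormedAddCommGroup E] [InnerProductSpace ℝ E]
    {C : Set E} (hCne : C.Nonempty) (hCconv : Convex ℝ C)
    {m L : ℝ} (hm : 0 < m) (hL : 0 ≤ L)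
    {f : Q → E → ℝ} {G : Q → E → E}
    (hsc : ∀ q : Q, StrongConvexOn C m (f q))
    (hd : ∀ q : Q, ∀ x ∈ C, HasFDerivAt (f q) (innerSL ℝ (G q x)) x)
    (hLip : ∀ q₁ q₂ : Q, ∀ x ∈ C, ‖G q₁ x - G q₂ x‖ ≤ L * dist q₁ q₂)
    {b : Q → E} (hbC : ∀ q, b q ∈ C)
    (hbmin : ∀ q : Q, ∀ y ∈ C, f q (b q) ≤ f q y) :
    ∀ q₁ q₂ : Q, ‖b q₁ - b q₂‖ ≤ (L / m) * dist q₁ q₂ := by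
  intro q₁ q₂
  set x₁ := b q₁ with hx₁def
  set x₂ := b q₂ with hx₂def
  have hx₁ := hbC q₁
  have hx₂ := hbC q₂
  have hg : ConvexOn ℝ C (fun x => f q₁ x - m / 2 * ‖x‖ ^ 2) :=
    strongConvexOn_iff_convex.1 (hsc q₁)
  have hder : ∀ x ∈ C, HasFDerivAt (fun x => f q₁ x - m / 2 * ‖x‖ ^ 2)
      (innerSL ℝ (G q₁ x - m • x)) x := by
    intro x hx
    have h1 := (hd q₁ x hx).sub
      ((hasStrictFDerivAt_norm_sq x).hasFDerivAt.const_mul (m / 2))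
    refine h1.congr_fderiv ?_
    ext v
    simp [inner_sub_left, real_inner_smul_left]
    ring
  have h1 := subgrad hCconv hg hx₁ (hder _ hx₁) hx₂
  have h2 := subgrad hCconv hg hx₂ (hder _ hx₂) hx₁
  have hf1 := foc hCconv hx₁ (hd q₁ _ hx₁) (hbmin q₁) hx₂
  have hf2 := foc hCconv hx₂ (hd q₂ _ hx₂) (hbmin q₂) hx₁
  simp only [innerSL_apply_apply, inner_sub_left, inner_sub_right, real_inner_smul_left] at h1 h2 hf1 hf2
  have hcs : (inner ℝ (G q₂ x₂ - G q₁ x₂) (x₁ - x₂) : ℝ)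
      ≤ ‖G q₂ x₂ - G q₁ x₂‖ * ‖x₁ - x₂‖ := real_inner_le_norm _ _
  simp only [inner_sub_left, inner_sub_right] at hcs
  have hlip := hLip q₂ q₁ x₂ hx₂
  rw [dist_comm q₂ q₁] at hlip
  have hns : ‖x₁ - x₂‖ ^ 2 = (inner ℝ x₁ x₁ : ℝ) - 2 * inner ℝ x₁ x₂ + inner ℝ x₂ x₂ := by
    rw [@norm_sub_sq_real, real_inner_self_eq_norm_sq, real_inner_self_eq_norm_sq]
  have hsym : (inner ℝ x₂ x₁ : ℝ) = inner ℝ x₁ x₂ := real_inner_comm _ _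
  have hnorm : (0:ℝ) ≤ ‖x₁ - x₂‖ := norm_nonneg _
  have hkey : m * ‖x₁ - x₂‖ ^ 2 ≤ L * dist q₁ q₂ * ‖x₁ - x₂‖ := by
    have hd0 : (0:ℝ) ≤ dist q₁ q₂ := dist_nonneg
    nlinarith [mul_le_mul_of_nonneg_right hlip hnorm]
  rcases eq_or_lt_of_le hnorm with h0 | h0
  · rw [← h0]
    positivity
  · rw [div_mul_eq_mul_div, le_div_iff₀ hm]
    nlinarith
end

section
/- Let E be a real normed vector space, L ∈ [0, 1), and T : E → E a Lipschitz map with constant L having a fixed point q* (T(q*) = q*). Let (β_t)_{t≥0} be a sequence in (0, 1] with ∑_{t=0}^∞ β_t = ∞, and let (e_t)_{t≥0} be a sequence in E with ‖e_t‖ → 0. Define a sequence (q_t)_{t≥0} in E by an arbitrary q_0 and q_{t+1} = (1 − β_t) q_t + β_t (T(q_t) + e_t). Then q_t → q*. -/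
open Filter

/-- Deterministic core of the two-time scale convergence theorem: averaged iteration toward
an `L`-contraction `T` (with `L < 1` and fixed point `q*`), with vanishing perturbations
`e_t` and step sizes `β_t ∈ (0, 1]` with `∑ β_t = ∞`, converges to `q*`. -/
theorem stmt_13 {E : Type*} [NormedAddCommGroup E] [NormedSpace ℝ E]
    {L : ℝ} (hL0 : 0 ≤ L) (hL1 : L < 1) {T : E → E}
    (hT : ∀ x y : E, ‖T x - T y‖ ≤ L * ‖x - y‖)
    {qs : E} (hfix : T qs = qs)
    {β : ℕ → ℝ} (hβ0 : ∀ t, 0 < β t) (hβ1 : ∀ t, β t ≤ 1)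
    (hβdiv : Tendsto (fun n => ∑ t ∈ Finset.range n, β t) atTop atTop)
    {e : ℕ → E} (he : Tendsto (fun t => ‖e t‖) atTop (nhds 0))
    (q : ℕ → E)
    (hrec : ∀ t, q (t + 1) = (1 - β t) • q t + β t • (T (q t) + e t)) :
    Tendsto q atTop (nhds qs) := by
  set c : ℝ := 1 - L with hc
  have hc0 : 0 < c := by simp [hc]; linarith
  have hc1 : c ≤ 1 := by simp [hc]; linarith
  set a : ℕ → ℝ := fun t => ‖q t - qs‖ with ha
  have ha0 : ∀ t, 0 ≤ a t := fun t => norm_nonneg _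
  have hbc0 : ∀ t, 0 < β t * c := fun t => mul_pos (hβ0 t) hc0
  have hbc1 : ∀ t, β t * c ≤ 1 := fun t =>
    (mul_le_one₀ (hβ1 t) hc0.le hc1)
  clear_value c
  have key : ∀ t, a (t + 1) ≤ (1 - β t * c) * a t + β t * ‖e t‖ := by
    intro t
    have h1 : q (t + 1) - qs
        = (1 - β t) • (q t - qs) + β t • (T (q t) - T qs) + β t • e t := by
      rw [hrec t, hfix]; module
    have h2 : a (t + 1) ≤ (1 - β t) * a t + β t * (L * a t) + β t * ‖e t‖ := by
      rw [show a (t+1) = ‖q (t+1) - qs‖ from rfl, h1]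
      refine (norm_add_le _ _).trans (add_le_add (norm_add_le _ _ |>.trans ?_) ?_)
      · refine add_le_add ?_ ?_
        · rw [norm_smul, Real.norm_eq_abs, abs_of_nonneg (by linarith [hβ1 t])]
        · rw [norm_smul, Real.norm_eq_abs, abs_of_nonneg (hβ0 t).le]
          exact mul_le_mul_of_nonneg_left (hT _ _) (hβ0 t).le
      · rw [norm_smul, Real.norm_eq_abs, abs_of_nonneg (hβ0 t).le]
    calc a (t+1) ≤ (1 - β t) * a t + β t * (L * a t) + β t * ‖e t‖ := h2
      _ = (1 - β t * c) * a t + β t * ‖e t‖ := by rw [hc]; ring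
  clear_value a
  -- show a → 0
  have haten : Tendsto a atTop (nhds 0) := by
    rw [tendsto_order]
    constructor
    · intro b hb
      exact Eventually.of_forall fun t => lt_of_lt_of_le hb (ha0 t)
    · intro ε hε
      -- choose N with ‖e t‖ < ε/4 * c for t ≥ N
      have hεc : (0:ℝ) < ε / 4 * c := by positivity
      obtain ⟨N, hN⟩ := (he.eventually_lt_const hεc).exists_forall_of_atTop
      -- inductive bound for t ≥ N
      set S : ℕ → ℝ := fun t => ∑ k ∈ Finset.Ico N t, β k with hS
      clear_value S
      have bound : ∀ t, N ≤ t → a t ≤ ε / 4 + Real.exp (-(c * S t)) * a N := by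
        intro t ht
        induction t with
        | zero =>
          have hN0 : N = 0 := Nat.le_zero.mp ht
          simp [hS, hN0]
          linarith [ha0 0, hε]
        | succ n ih =>
          rcases Nat.lt_or_ge N (n+1) with h | h
          · have hn : N ≤ n := Nat.lt_succ_iff.mp h
            have ihn := ih hn
            have hSn : S (n+1) = S n + β n := by
              rw [hS]
              exact Finset.sum_Ico_succ_top hn _
            have hexp : (1 - β n * c) ≤ Real.exp (-(β n * c)) := by
              have := Real.add_one_le_exp (-(β n * c))
              linarith
            have h1 : a (n+1) ≤ (1 - β n * c) * (ε / 4 + Real.exp (-(c * S n)) * a N)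
                + β n * ‖e n‖ := by
              refine (key n).trans (add_le_add ?_ le_rfl)
              exact mul_le_mul_of_nonneg_left ihn (by linarith [hbc1 n])
            have h2 : β n * ‖e n‖ ≤ β n * c * (ε / 4) := by
              have := (hN n hn).le
              calc β n * ‖e n‖ ≤ β n * (ε / 4 * c) :=
                    mul_le_mul_of_nonneg_left this (hβ0 n).le
                _ = β n * c * (ε / 4) := by ring
            have h3 : (1 - β n * c) * Real.exp (-(c * S n))
                ≤ Real.exp (-(c * S (n+1))) := by
              rw [hSn, show -(c * (S n + β n)) = -(β n * c) + -(c * S n) by ring,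
                Real.exp_add]
              exact mul_le_mul_of_nonneg_right hexp (Real.exp_pos _).le
            calc a (n+1) ≤ (1 - β n * c) * (ε / 4 + Real.exp (-(c * S n)) * a N)
                + β n * ‖e n‖ := h1
              _ ≤ (1 - β n * c) * ε / 4 + (1 - β n * c) * Real.exp (-(c * S n)) * a N
                  + β n * c * (ε / 4) := by nlinarith [h2]
              _ ≤ ε / 4 + Real.exp (-(c * S (n+1))) * a N := by
                  have h4 := mul_le_mul_of_nonneg_right h3 (ha0 N)
                  nlinarith [h4, hbc0 n, hbc1 n, hε]
          · have hn : n + 1 = N := le_antisymm h ht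
            rw [hn]
            simp [hS]
            linarith [hε]
      -- exp(-(c * S t)) * a N → 0
      have hStend : Tendsto S atTop atTop := by
        have h1 : Tendsto (fun t => (∑ k ∈ Finset.range t, β k)
            - ∑ k ∈ Finset.range N, β k) atTop atTop :=
          tendsto_atTop_add_const_right _ _ hβdiv
        apply h1.congr'
        filter_upwards [eventually_ge_atTop N] with t ht
        rw [hS]
        exact (Finset.sum_Ico_eq_sub _ ht).symm
      have hexptend : Tendsto (fun t => Real.exp (-(c * S t)) * a N) atTop (nhds 0) := by
        have : Tendsto (fun t => -(c * S t)) atTop atBot := by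
          have := hStend.const_mul_atTop hc0
          exact tendsto_neg_atBot_iff.mpr this
        have h2 := Real.tendsto_exp_atBot.comp this
        simpa using h2.mul_const (a N)
      have hev : ∀ᶠ t in atTop, Real.exp (-(c * S t)) * a N < ε / 4 :=
        hexptend.eventually_lt_const (by positivity)
      filter_upwards [hev, eventually_ge_atTop N] with t h1 h2
      have := bound t h2
      linarith
  rw [tendsto_iff_norm_sub_tendsto_zero]
  exact ha ▸ haten
end
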